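/- Let Φ̄(t) = P_{g∼N(0,1)}[g ≥ t] denote the standard Gaussian upper tail. Then for every t ≥ 1, Φ̄(2t) ≤ 512 · (ln(1/Φ̄(t)))^{3/2} · Φ̄(t)⁴. -/

import Mathlib

open MeasureTheory Real Filter Set Topology

/-- Standard gaussian density. -/
noncomputable def phiG (x : ℝ) : ℝ := (Real.sqrt (2 * Real.pi))⁻¹ * Real.exp (-x ^ 2 / 2)

lemma phiG_eq_pdf : ProbabilityTheory.gaussianPDFReal 0 1 = phiG := by
  funext x
  simp [ProbabilityTheory.gaussianPDFReal, phiG]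

lemma phiG_pos (x : ℝ) : 0 < phiG x := by
  have := Real.pi_pos
  unfold phiG; positivity

lemma phiG_nonneg (x : ℝ) : 0 ≤ phiG x := (phiG_pos x).le

lemma continuous_phiG : Continuous phiG := by
  unfold phiG; fun_prop

lemma integrable_phiG : Integrable phiG := by
  rw [← phiG_eq_pdf]; exact ProbabilityTheory.integrable_gaussianPDFReal 0 1

lemma hasDerivAt_phiG (x : ℝ) : HasDerivAt phiG (-x * phiG x) x := by
  have h1 : HasDerivAt (fun y : ℝ => -y ^ 2 / 2) (-x) x := by
    have := ((hasDerivAt_pow 2 x).neg).div_const 2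
    refine this.congr_deriv ?_
    simp; ring
  have h2 := (Real.hasDerivAt_exp (-x ^ 2 / 2)).comp x h1
  have h3 := h2.const_mul (Real.sqrt (2 * Real.pi))⁻¹
  refine h3.congr_deriv ?_
  unfold phiG; ring

lemma tendsto_phiG : Tendsto phiG atTop (𝓝 0) := by
  have hsq : Tendsto (fun x : ℝ => x ^ 2 / 2) atTop atTop :=
    Tendsto.atTop_div_const two_pos (tendsto_pow_atTop two_ne_zero)
  have h := Real.tendsto_exp_neg_atTop_nhds_zero.comp hsq
  have h2 : Tendsto (fun x : ℝ => (Real.sqrt (2 * Real.pi))⁻¹ * Real.exp (-(x ^ 2 / 2)))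
      atTop (𝓝 ((Real.sqrt (2 * Real.pi))⁻¹ * 0)) := h.const_mul _
  unfold phiG
  simpa only [neg_div, mul_zero] using h2

lemma gaussTail_eq' (t : ℝ) :
    ((ProbabilityTheory.gaussianReal 0 1) (Set.Ici t)).toReal = ∫ x in Set.Ioi t, phiG x := by
  rw [ProbabilityTheory.gaussianReal_apply_eq_integral 0 one_ne_zero,
    ENNReal.toReal_ofReal (setIntegral_nonneg measurableSet_Ici fun x _ =>
      ProbabilityTheory.gaussianPDFReal_nonneg 0 1 x),
    phiG_eq_pdf, integral_Ici_eq_integral_Ioi]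

/-- Upper bound `Φ̄(t) ≤ φ(t)/t` for `t ≥ 1`. -/
lemma tail_upper (t : ℝ) (ht : 1 ≤ t) :
    (∫ x in Set.Ioi t, phiG x) ≤ phiG t / t := by
  have ht0 : (0:ℝ) < t := lt_of_lt_of_le one_pos ht
  set g' : ℝ → ℝ := fun x => (-x * phiG x * x - phiG x * 1) / x ^ 2 with hg'def
  have hderiv : ∀ x ∈ Set.Ici t, HasDerivAt (fun y => phiG y / y) (g' x) x := by
    intro x hx
    have hx0 : x ≠ 0 := ne_of_gt (lt_of_lt_of_le ht0 hx)
    exact (hasDerivAt_phiG x).div (hasDerivAt_id' x) hx0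
  have g'int : IntegrableOn g' (Set.Ioi t) := by
    refine Integrable.mono (g := fun x => 2 * phiG x)
      ((integrable_phiG.const_mul 2).integrableOn) ?_ ?_
    · refine (ContinuousOn.div ?_ ?_ ?_).aestronglyMeasurable measurableSet_Ioi
      · exact (((continuous_neg.mul continuous_phiG).mul continuous_id).sub
          (continuous_phiG.mul continuous_const)).continuousOn
      · exact (continuous_pow 2).continuousOn
      · intro x hx
        exact pow_ne_zero 2 (ne_of_gt (lt_trans ht0 hx))
    · filter_upwards [ae_restrict_mem measurableSet_Ioi] with x hx
      have hx1 : 1 ≤ x := le_of_lt (lt_of_le_of_lt ht hx)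
      have hx2 : (0:ℝ) < x ^ 2 := by positivity
      have hφ := phiG_nonneg x
      rw [Real.norm_eq_abs, Real.norm_eq_abs, hg'def, abs_div,
        abs_of_nonneg (le_of_lt hx2), abs_of_nonneg (by positivity : (0:ℝ) ≤ 2 * phiG x),
        div_le_iff₀ hx2, abs_of_nonpos (by nlinarith)]
      nlinarith [mul_nonneg hφ (by nlinarith : (0:ℝ) ≤ x ^ 2 - 1)]
  have htend : Tendsto (fun y => phiG y / y) atTop (𝓝 0) := by
    refine squeeze_zero' ?_ ?_ tendsto_phiG
    · filter_upwards [eventually_ge_atTop (1:ℝ)] with x hx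
      exact div_nonneg (phiG_nonneg x) (by linarith)
    · filter_upwards [eventually_ge_atTop (1:ℝ)] with x hx
      exact div_le_self (phiG_nonneg x) hx
  have key := integral_Ioi_of_hasDerivAt_of_tendsto' hderiv g'int htend
  have hmono : (∫ x in Set.Ioi t, phiG x) ≤ ∫ x in Set.Ioi t, -g' x := by
    refine setIntegral_mono_on (integrable_phiG.integrableOn) (g'int.neg)
      measurableSet_Ioi ?_
    intro x hx
    have hx0 : (0:ℝ) < x := lt_trans ht0 hx
    have hx2 : (0:ℝ) < x ^ 2 := by positivity
    have hφ := phiG_nonneg x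
    rw [hg'def, ← neg_div, le_div_iff₀ hx2]
    nlinarith
  calc (∫ x in Set.Ioi t, phiG x) ≤ ∫ x in Set.Ioi t, -g' x := hmono
    _ = -(∫ x in Set.Ioi t, g' x) := by rw [integral_neg]
    _ = phiG t / t := by rw [key]; ring

/-- Lower bound `Φ̄(t) ≥ t·φ(t)/(t²+1)`. -/
lemma tail_lower (t : ℝ) (ht : 1 ≤ t) :
    t * phiG t / (t ^ 2 + 1) ≤ ∫ x in Set.Ioi t, phiG x := by
  have ht0 : (0:ℝ) < t := lt_of_lt_of_le one_pos ht
  set f' : ℝ → ℝ := fun x => phiG x * (1 - 2 * x ^ 2 - x ^ 4) / (x ^ 2 + 1) ^ 2 with hf'def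
  have hderiv : ∀ x ∈ Set.Ici t, HasDerivAt (fun y => y * phiG y / (y ^ 2 + 1)) (f' x) x := by
    intro x _
    have hden : x ^ 2 + 1 ≠ 0 := by positivity
    have h := ((hasDerivAt_id' x).mul (hasDerivAt_phiG x)).div
      ((hasDerivAt_pow 2 x).add_const 1) hden
    simp only [hf'def]
    refine h.congr_deriv ?_
    simp only [Pi.mul_apply]
    push_cast
    ring
  have f'int : IntegrableOn f' (Set.Ioi t) := by
    refine Integrable.mono integrable_phiG.integrableOn ?_ ?_
    · refine (ContinuousOn.div ?_ ?_ ?_).aestronglyMeasurable measurableSet_Ioi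
      · exact (continuous_phiG.mul (by continuity)).continuousOn
      · exact (((continuous_pow 2).add continuous_const).pow 2).continuousOn
      · intro x _; positivity
    · filter_upwards [ae_restrict_mem measurableSet_Ioi] with x _
      have hden : (0:ℝ) < (x ^ 2 + 1) ^ 2 := by positivity
      have hφ := phiG_nonneg x
      rw [Real.norm_eq_abs, Real.norm_eq_abs, hf'def, abs_div,
        abs_of_nonneg (le_of_lt hden), abs_of_nonneg hφ, div_le_iff₀ hden, abs_mul,
        abs_of_nonneg hφ]
      have habs : |1 - 2 * x ^ 2 - x ^ 4| ≤ (x ^ 2 + 1) ^ 2 := by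
        rw [abs_le]; constructor <;> nlinarith [sq_nonneg x, sq_nonneg (x ^ 2)]
      nlinarith
  have htend : Tendsto (fun y => y * phiG y / (y ^ 2 + 1)) atTop (𝓝 0) := by
    refine squeeze_zero' ?_ ?_ tendsto_phiG
    · filter_upwards [eventually_ge_atTop (0:ℝ)] with x hx
      have := phiG_nonneg x; positivity
    · filter_upwards [eventually_ge_atTop (0:ℝ)] with x hx
      have hden : (0:ℝ) < x ^ 2 + 1 := by positivity
      rw [div_le_iff₀ hden]
      nlinarith [phiG_nonneg x, sq_nonneg (x - 1)]
  have key := integral_Ioi_of_hasDerivAt_of_tendsto' hderiv f'int htend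
  have hmono : (∫ x in Set.Ioi t, -f' x) ≤ ∫ x in Set.Ioi t, phiG x := by
    refine setIntegral_mono_on (f'int.neg) (integrable_phiG.integrableOn)
      measurableSet_Ioi ?_
    intro x _
    have hden : (0:ℝ) < (x ^ 2 + 1) ^ 2 := by positivity
    have hφ := phiG_nonneg x
    rw [hf'def, ← neg_div, div_le_iff₀ hden]
    nlinarith [sq_nonneg x, sq_nonneg (x ^ 2)]
  have : (∫ x in Set.Ioi t, -f' x) = t * phiG t / (t ^ 2 + 1) := by
    rw [integral_neg, key]; ring
  linarith [hmono, this.ge, this.le]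

/-- The standard Gaussian upper tail `Φ̄(t) = P_{g ∼ N(0,1)}[g ≥ t]`. -/
noncomputable def gaussTail (t : ℝ) : ℝ :=
  ((ProbabilityTheory.gaussianReal 0 1) (Set.Ici t)).toReal

set_option maxHeartbeats 1600000 in
theorem gaussian_tail_twice_t_bound (t : ℝ) (ht : 1 ≤ t) :
    gaussTail (2 * t) ≤
      512 * (Real.log (1 / gaussTail t)) ^ ((3 : ℝ) / 2) * (gaussTail t) ^ 4 := by
  have ht0 : (0:ℝ) < t := lt_of_lt_of_le one_pos ht
  have hπ : (3:ℝ) < Real.pi := Real.pi_gt_three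
  have hπ4 : Real.pi ≤ 4 := Real.pi_le_four
  set s := Real.sqrt (2 * Real.pi) with hs
  have hs2 : s ^ 2 = 2 * Real.pi := Real.sq_sqrt (by linarith)
  have hs_pos : 0 < s := Real.sqrt_pos.mpr (by linarith)
  have hs_ge2 : 2 ≤ s := by
    nlinarith [hs2, hs_pos]
  have hA_eq : gaussTail t = ∫ x in Set.Ioi t, phiG x := gaussTail_eq' t
  have hB_eq : gaussTail (2 * t) = ∫ x in Set.Ioi (2 * t), phiG x := gaussTail_eq' (2 * t)
  set A := gaussTail t with hA
  set B := gaussTail (2 * t) with hB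
  have hφt : phiG t = s⁻¹ * Real.exp (-t ^ 2 / 2) := rfl
  have hexp_pos : (0:ℝ) < Real.exp (-t ^ 2 / 2) := Real.exp_pos _
  -- lower bound on A
  have hA_low : s⁻¹ * Real.exp (-t ^ 2 / 2) / (2 * t) ≤ A := by
    have h1 := tail_lower t ht
    rw [← hA_eq] at h1
    have h2 : s⁻¹ * Real.exp (-t ^ 2 / 2) / (2 * t) ≤ t * phiG t / (t ^ 2 + 1) := by
      rw [hφt, div_le_div_iff₀ (by positivity) (by positivity)]
      have : (0:ℝ) < s⁻¹ * Real.exp (-t ^ 2 / 2) := by positivity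
      nlinarith [sq_nonneg (t - 1)]
    linarith
  have hA_pos : 0 < A := lt_of_lt_of_le (by positivity) hA_low
  -- upper bound on A
  have hA_up : A ≤ Real.exp (-t ^ 2 / 2) / 2 := by
    have h1 := tail_upper t ht
    rw [← hA_eq] at h1
    have h2 : phiG t / t ≤ phiG t := div_le_self (phiG_nonneg t) ht
    have h3 : phiG t ≤ Real.exp (-t ^ 2 / 2) / 2 := by
      rw [hφt]
      rw [inv_mul_le_iff₀ hs_pos] -- may need different form
      calc Real.exp (-t ^ 2 / 2) = (Real.exp (-t ^ 2 / 2) / 2) * 2 := by ring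
        _ ≤ (Real.exp (-t ^ 2 / 2) / 2) * s := by nlinarith
        _ = s * (Real.exp (-t ^ 2 / 2) / 2) := by ring
    linarith
  -- upper bound on B
  have hB_up : B ≤ s⁻¹ * Real.exp (-2 * t ^ 2) / (2 * t) := by
    have h1 := tail_upper (2 * t) (by linarith)
    rw [← hB_eq] at h1
    have : phiG (2 * t) = s⁻¹ * Real.exp (-2 * t ^ 2) := by
      rw [phiG]
      congr 1
      congr 1
      ring
    rw [this] at h1
    exact h1
  -- log bound
  have hL_low : t ^ 2 / 2 ≤ Real.log (1 / A) := by
    have hmulexp : Real.exp (-t ^ 2 / 2) * Real.exp (t ^ 2 / 2) = 1 := by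
      rw [← Real.exp_add, show -t ^ 2 / 2 + t ^ 2 / 2 = 0 by ring, Real.exp_zero]
    have h1 : 1 / A ≥ 2 * Real.exp (t ^ 2 / 2) := by
      rw [ge_iff_le, le_div_iff₀ hA_pos]
      nlinarith [mul_le_mul_of_nonneg_left hA_up
        (by positivity : (0:ℝ) ≤ 2 * Real.exp (t ^ 2 / 2)), hmulexp]
    have h3 : Real.log (2 * Real.exp (t ^ 2 / 2)) ≤ Real.log (1 / A) :=
      Real.log_le_log (by positivity) h1
    have h4 : Real.log (2 * Real.exp (t ^ 2 / 2)) = Real.log 2 + t ^ 2 / 2 := by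
      rw [Real.log_mul two_ne_zero (Real.exp_ne_zero _), Real.log_exp]
    have h5 : (0:ℝ) < Real.log 2 := Real.log_pos one_lt_two
    linarith
  set L := Real.log (1 / A) with hL
  set Q := ((t ^ 2 / 2) : ℝ) ^ ((3:ℝ) / 2) with hQ
  have hQ_nonneg : 0 ≤ Q := Real.rpow_nonneg (by positivity) _
  have hQ_le : Q ≤ L ^ ((3:ℝ) / 2) :=
    Real.rpow_le_rpow (by positivity) hL_low (by norm_num)
  have hQsq : Q ^ 2 = t ^ 6 / 8 := by
    rw [hQ, ← Real.rpow_natCast (((t ^ 2 / 2) : ℝ) ^ ((3:ℝ) / 2)) 2,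
      ← Real.rpow_mul (by positivity)]
    norm_num
    ring
  -- key: s^3 * t^3 / 64 ≤ Q
  have hQ_low : s ^ 3 * t ^ 3 / 64 ≤ Q := by
    have h1 : (s ^ 3 * t ^ 3 / 64) ^ 2 ≤ Q ^ 2 := by
      rw [hQsq]
      have hs8 : s ^ 2 ≤ 8 := by nlinarith [hs2, hπ4]
      have hs6 : s ^ 6 ≤ 512 := by
        calc s ^ 6 = (s ^ 2) ^ 3 := by ring
          _ ≤ 8 ^ 3 := pow_le_pow_left₀ (sq_nonneg s) hs8 3
          _ = 512 := by norm_num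
      have ht6 : (0:ℝ) ≤ t ^ 6 := by positivity
      calc (s ^ 3 * t ^ 3 / 64) ^ 2 = s ^ 6 * t ^ 6 / 4096 := by ring
        _ ≤ 512 * t ^ 6 / 4096 := by nlinarith
        _ = t ^ 6 / 8 := by ring
    have h2 : (0:ℝ) ≤ s ^ 3 * t ^ 3 / 64 := by positivity
    nlinarith
  -- now combine
  have hA4 : (s⁻¹ * Real.exp (-t ^ 2 / 2) / (2 * t)) ^ 4 ≤ A ^ 4 := by
    apply pow_le_pow_left₀ (by positivity) hA_low
  have hE : (s⁻¹ * Real.exp (-t ^ 2 / 2) / (2 * t)) ^ 4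
      = Real.exp (-2 * t ^ 2) / (s ^ 4 * 16 * t ^ 4) := by
    have h1 : Real.exp (-t ^ 2 / 2) ^ 4 = Real.exp (-2 * t ^ 2) := by
      rw [← Real.exp_nat_mul]
      congr 1; ring
    rw [div_pow, mul_pow, inv_pow, h1, div_eq_div_iff (by positivity) (by positivity),
      inv_mul_eq_div, div_mul_eq_mul_div, div_eq_iff (by positivity : (s:ℝ) ^ 4 ≠ 0)]
    ring
  have hmain : s⁻¹ * Real.exp (-2 * t ^ 2) / (2 * t) ≤
      512 * Q * (Real.exp (-2 * t ^ 2) / (s ^ 4 * 16 * t ^ 4)) := by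
    have hP : (0:ℝ) < s ^ 4 * 16 * t ^ 4 := by positivity
    have hexp2 : (0:ℝ) < Real.exp (-2 * t ^ 2) := Real.exp_pos _
    have key : s ^ 3 * t ^ 3 ≤ 64 * Q := by linarith [hQ_low]
    rw [div_le_iff₀ (by positivity : (0:ℝ) < 2 * t)]
    apply le_of_mul_le_mul_right _ hP
    have h1 : s⁻¹ * Real.exp (-2 * t ^ 2) * (s ^ 4 * 16 * t ^ 4)
        = 16 * (s ^ 3 * t ^ 3) * (Real.exp (-2 * t ^ 2) * t) := by
      rw [inv_mul_eq_div, div_mul_eq_mul_div, div_eq_iff (ne_of_gt hs_pos)]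
      ring
    have h2 : 512 * Q * (Real.exp (-2 * t ^ 2) / (s ^ 4 * 16 * t ^ 4)) * (2 * t) *
        (s ^ 4 * 16 * t ^ 4) = 16 * (64 * Q) * (Real.exp (-2 * t ^ 2) * t) := by
      calc 512 * Q * (Real.exp (-2 * t ^ 2) / (s ^ 4 * 16 * t ^ 4)) * (2 * t) *
            (s ^ 4 * 16 * t ^ 4)
          = 512 * Q * (2 * t) *
            (Real.exp (-2 * t ^ 2) / (s ^ 4 * 16 * t ^ 4) * (s ^ 4 * 16 * t ^ 4)) := by ring
        _ = 512 * Q * (2 * t) * Real.exp (-2 * t ^ 2) := by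
            rw [div_mul_cancel₀ _ (ne_of_gt hP)]
        _ = 16 * (64 * Q) * (Real.exp (-2 * t ^ 2) * t) := by ring
    rw [h1, h2]
    have h5 : (0:ℝ) ≤ Real.exp (-2 * t ^ 2) * t := by positivity
    nlinarith [mul_le_mul_of_nonneg_right key h5]
  calc B ≤ s⁻¹ * Real.exp (-2 * t ^ 2) / (2 * t) := hB_up
    _ ≤ 512 * Q * (Real.exp (-2 * t ^ 2) / (s ^ 4 * 16 * t ^ 4)) := hmain
    _ ≤ 512 * Q * A ^ 4 := by
        rw [← hE]
        apply mul_le_mul_of_nonneg_left hA4 (by positivity)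
    _ ≤ 512 * L ^ ((3:ℝ) / 2) * A ^ 4 := by
        apply mul_le_mul_of_nonneg_right _ (by positivity)
        apply mul_le_mul_of_nonneg_left hQ_le (by norm_num)
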